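/- If R is S-coherent, then every finitely generated R-submodule of a free R-module is S-finitely presented. -/

import Mathlib

def IsSFinite {R : Type*} [CommRing R] (S : Submonoid R) (M : Type*) [AddCommGroup M]
    [Module R M] : Prop :=
  ∃ s ∈ S, ∃ N : Submodule R M, N.FG ∧ ∀ m : M, s • m ∈ N

def IsSFinitelyPresented {R : Type*} [CommRing R] (S : Submonoid R) (M : Type*)
    [AddCommGroup M] [Module R M] : Prop :=
  ∃ (n : ℕ) (f : (Fin n → R) →ₗ[R] M), Function.Surjective f ∧ IsSFinite S (LinearMap.ker f)

/-- An ideal `I` is `S`-finite: `s • I ⊆ J ⊆ I` for some finitely generated ideal `J`, `s ∈ S`. -/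
def IsSFiniteIdeal {R : Type*} [CommRing R] (S : Submonoid R) (I : Ideal R) : Prop :=
  ∃ s ∈ S, ∃ J : Ideal R, J.FG ∧ J ≤ I ∧ ∀ x ∈ I, s * x ∈ J

/-- `R` is `S`-coherent if every finitely generated ideal is `S`-finitely presented. -/
def IsSCoherentRing (R : Type*) [CommRing R] (S : Submonoid R) : Prop :=
  ∀ I : Ideal R, I.FG → IsSFinitelyPresented S ↥I

universe u v

section Aux

variable {R : Type u} [CommRing R] (S : Submonoid R)

theorem isSFinite_submodule_iff {M : Type*} [AddCommGroup M] [Module R M]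
    (P : Submodule R M) :
    IsSFinite S ↥P ↔ ∃ s ∈ S, ∃ K : Submodule R M, K.FG ∧ K ≤ P ∧ ∀ x ∈ P, s • x ∈ K := by
  constructor
  · rintro ⟨s, hs, N, hNfg, hN⟩
    refine ⟨s, hs, N.map P.subtype, hNfg.map _, ?_, ?_⟩
    · rintro x ⟨y, _, rfl⟩; exact y.2
    · intro x hx
      exact ⟨s • ⟨x, hx⟩, hN ⟨x, hx⟩, rfl⟩
  · rintro ⟨s, hs, K, hKfg, hKP, hK⟩
    refine ⟨s, hs, K.comap P.subtype, ?_, ?_⟩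
    · apply Submodule.fg_of_fg_map_injective P.subtype Subtype.val_injective
      rwa [Submodule.map_comap_subtype, inf_eq_right.mpr hKP]
    · intro m
      simpa using hK m m.2

theorem sfp_congr {M : Type v} [AddCommGroup M] [Module R M] {M' : Type*}
    [AddCommGroup M'] [Module R M'] (e : M ≃ₗ[R] M')
    (hM : IsSFinitelyPresented S M) : IsSFinitelyPresented S M' := by
  obtain ⟨n, f, hf, hker⟩ := hM
  refine ⟨n, e.toLinearMap ∘ₗ f, e.surjective.comp hf, ?_⟩
  have hk : LinearMap.ker (e.toLinearMap ∘ₗ f) = LinearMap.ker f := by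
    rw [LinearMap.ker_comp, LinearEquiv.ker, Submodule.comap_bot]
  rw [hk]
  exact hker

/-- If `M` is `S`-finitely presented, then the kernel of any surjection from a finite free
module onto `M` is `S`-finite. -/
theorem ker_sfinite_of_sfp {M : Type*} [AddCommGroup M] [Module R M]
    (hM : IsSFinitelyPresented S M) {k : ℕ} (f : (Fin k → R) →ₗ[R] M)
    (hf : Function.Surjective f) :
    ∃ s ∈ S, ∃ K : Submodule R (Fin k → R), K.FG ∧ K ≤ LinearMap.ker f ∧
      ∀ x ∈ LinearMap.ker f, s • x ∈ K := by
  obtain ⟨n, p, hp, hkerp⟩ := hM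
  rw [isSFinite_submodule_iff] at hkerp
  obtain ⟨s, hs, Kp, hKpfg, hKple, hKp⟩ := hkerp
  obtain ⟨u, hu⟩ := Module.projective_lifting_property p f hp
  obtain ⟨vv, hv⟩ := Module.projective_lifting_property f p hf
  set w : (Fin k → R) →ₗ[R] (Fin k → R) := LinearMap.id - vv ∘ₗ u with hw
  have hrangewfg : (LinearMap.range w).FG := by
    rw [LinearMap.range_eq_map]
    exact (Module.finite_def.mp inferInstance).map w
  refine ⟨s, hs, Kp.map vv ⊔ LinearMap.range w, (hKpfg.map vv).sup hrangewfg, ?_, ?_⟩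
  · apply sup_le
    · rintro x ⟨y, hy, rfl⟩
      have h0 : p y = 0 := hKple hy
      have h1 : f (vv y) = p y := by rw [← hv]; rfl
      simp [LinearMap.mem_ker, h1, h0]
    · rintro x ⟨y, rfl⟩
      have h1 : f (vv (u y)) = p (u y) := by rw [← hv]; rfl
      have h2 : p (u y) = f y := by rw [← hu]; rfl
      simp [hw, LinearMap.mem_ker, map_sub, h1, h2]
  · intro x hx
    have hux : u x ∈ LinearMap.ker p := by
      rw [LinearMap.mem_ker]
      have h2 : p (u x) = f x := by rw [← hu]; rfl
      rw [h2]
      exact hx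
    have h1 : s • u x ∈ Kp := hKp _ hux
    have hdecomp : s • x = vv (s • u x) + w (s • x) := by
      simp only [hw, map_smul, LinearMap.sub_apply, LinearMap.id_apply, LinearMap.comp_apply,
        smul_sub]
      abel
    rw [hdecomp]
    exact Submodule.add_mem_sup (Submodule.mem_map_of_mem h1) ⟨s • x, rfl⟩

/-- Extension by zero in the first coordinate, as a linear map. -/
def consZero (R : Type u) [CommRing R] (n : ℕ) : (Fin n → R) →ₗ[R] (Fin (n + 1) → R) where
  toFun x := Fin.cons 0 x
  map_add' x y := by
    funext i
    refine Fin.cases ?_ (fun i => ?_) i <;> simp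
  map_smul' c x := by
    funext i
    refine Fin.cases ?_ (fun i => ?_) i <;> simp

theorem consZero_injective (R : Type u) [CommRing R] (n : ℕ) :
    Function.Injective (consZero R n) := by
  intro x y hxy
  funext i
  have := congrFun hxy i.succ
  simpa [consZero] using this

theorem mem_range_consZero {R : Type u} [CommRing R] {n : ℕ} {x : Fin (n + 1) → R}
    (hx : x 0 = 0) : x ∈ LinearMap.range (consZero R n) := by
  refine ⟨fun i => x i.succ, ?_⟩
  funext i
  refine Fin.cases ?_ (fun i => ?_) i <;> simp [consZero, hx]

theorem sfp_pi {R : Type u} [CommRing R] (S : Submonoid R) (h : IsSCoherentRing R S) :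
    ∀ (n : ℕ) (N : Submodule R (Fin n → R)), N.FG → IsSFinitelyPresented S ↥N := by
  intro n
  induction n with
  | zero =>
    intro N _
    refine ⟨0, 0, ?_, 1, S.one_mem, ⊤, ?_, fun m => trivial⟩
    · intro m
      refine ⟨0, ?_⟩
      have hm : (m : Fin 0 → R) = 0 := funext fun i => i.elim0
      exact Subtype.ext (by simp [hm])
    · refine ⟨{0}, ?_⟩
      refine eq_top_iff.mpr fun x _ => ?_
      have hx : x = 0 := Subsingleton.elim x 0
      rw [hx]
      exact Submodule.zero_mem _
  | succ n ih =>
    intro N hN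
    obtain ⟨k, vgen, hvgen⟩ := Submodule.fg_iff_exists_fin_generating_family.mp hN
    set φ : (Fin k → R) →ₗ[R] (Fin (n + 1) → R) := Fintype.linearCombination R vgen with hφ
    have hφrange : LinearMap.range φ = N := by
      rw [hφ, Fintype.range_linearCombination, hvgen]
    set π : (Fin (n + 1) → R) →ₗ[R] R := LinearMap.proj 0 with hπ
    set ψ : (Fin k → R) →ₗ[R] R := π ∘ₗ φ with hψ
    have hIfg : (LinearMap.range ψ).FG := by
      rw [LinearMap.range_eq_map]
      exact (Module.finite_def.mp inferInstance).map ψ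
    obtain ⟨s₂, hs₂, K₂, hK₂fg, hK₂le, hK₂⟩ :=
      ker_sfinite_of_sfp S (h _ hIfg) ψ.rangeRestrict ψ.surjective_rangeRestrict
    rw [LinearMap.ker_rangeRestrict] at hK₂le hK₂
    -- N₀' = φ(K₂) is a finitely generated submodule inside "ker π"
    set N₀' : Submodule R (Fin (n + 1) → R) := K₂.map φ with hN₀'
    have hN₀'le : N₀' ≤ LinearMap.range (consZero R n) := by
      rintro _ ⟨y, hy, rfl⟩
      have h0 : φ y 0 = 0 := hK₂le hy
      exact mem_range_consZero h0
    set N₀'' : Submodule R (Fin n → R) := N₀'.comap (consZero R n) with hN₀''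
    have hmap : N₀''.map (consZero R n) = N₀' := by
      rw [hN₀'', Submodule.map_comap_eq]
      exact inf_eq_right.mpr hN₀'le
    have hN₀''fg : N₀''.FG := by
      apply Submodule.fg_of_fg_map_injective _ (consZero_injective R n)
      rw [hmap]
      exact hK₂fg.map φ
    have hN₀'sfp : IsSFinitelyPresented S ↥N₀' := by
      have := sfp_congr S
        (Submodule.equivMapOfInjective _ (consZero_injective R n) N₀'') (ih N₀'' hN₀''fg)
      rwa [hmap] at this
    obtain ⟨m, wgen, hwgen⟩ := Submodule.fg_iff_exists_fin_generating_family.mp hK₂fg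
    set γ : (Fin m → R) →ₗ[R] (Fin k → R) := Fintype.linearCombination R wgen with hγ
    have hγrange : LinearMap.range γ = K₂ := by
      rw [hγ, Fintype.range_linearCombination, hwgen]
    set δ : (Fin m → R) →ₗ[R] (Fin (n + 1) → R) := φ ∘ₗ γ with hδ
    have hδrange : LinearMap.range δ = N₀' := by
      rw [hδ, LinearMap.range_comp, hγrange]
    have hδsfp : IsSFinitelyPresented S ↥(LinearMap.range δ) := by
      rw [hδrange]; exact hN₀'sfp
    obtain ⟨s₃, hs₃, K₃, hK₃fg, hK₃le, hK₃⟩ :=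
      ker_sfinite_of_sfp S hδsfp δ.rangeRestrict δ.surjective_rangeRestrict
    rw [LinearMap.ker_rangeRestrict] at hK₃le hK₃
    refine ⟨k, φ.codRestrict N (fun x => hφrange ▸ ⟨x, rfl⟩), ?_, ?_⟩
    · rintro ⟨y, hy⟩
      rw [← hφrange] at hy
      obtain ⟨x, hx⟩ := hy
      exact ⟨x, Subtype.ext hx⟩
    · rw [LinearMap.ker_codRestrict, isSFinite_submodule_iff]
      refine ⟨s₃ * s₂, S.mul_mem hs₃ hs₂, K₃.map γ, hK₃fg.map γ, ?_, ?_⟩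
      · rintro _ ⟨y, hy, rfl⟩
        have h0 : δ y = 0 := hK₃le hy
        rw [hδ] at h0
        exact h0
      · intro x hx
        have hxφ : φ x = 0 := hx
        have hxψ : x ∈ LinearMap.ker ψ := by
          rw [LinearMap.mem_ker, hψ, LinearMap.comp_apply, hxφ, map_zero]
        have h2 : s₂ • x ∈ K₂ := hK₂ x hxψ
        rw [← hγrange] at h2
        obtain ⟨y, hy⟩ := h2
        have hyker : y ∈ LinearMap.ker δ := by
          rw [LinearMap.mem_ker, hδ, LinearMap.comp_apply, hy, map_smul, hxφ, smul_zero]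
        refine ⟨s₃ • y, hK₃ y hyker, ?_⟩
        rw [map_smul, hy, smul_smul]

end Aux

theorem sfp_submodule_of_free_of_scoherent {R : Type u} [CommRing R] (S : Submonoid R)
    (h : IsSCoherentRing R S) :
    ∀ (F : Type v) [AddCommGroup F] [Module R F], Module.Free R F →
      ∀ N : Submodule R F, N.FG → IsSFinitelyPresented S ↥N := by
  intro F _ _ hF N hN
  classical
  obtain ⟨⟨ι, b⟩⟩ := hF.exists_basis
  obtain ⟨T, hT⟩ := id hN
  set supp : Finset ι := T.sup fun t => (b.repr t).support with hsupp
  set c : F →ₗ[R] (↥supp → R) :=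
    LinearMap.pi fun i => (Finsupp.lapply i.1) ∘ₗ (b.repr : F →ₗ[R] (ι →₀ R)) with hc
  have hsupport : ∀ x ∈ N, ((b.repr x).support : Set ι) ⊆ (supp : Set ι) := by
    intro x hx
    have hle : Submodule.span R (T : Set F) ≤
        (Finsupp.supported R R (supp : Set ι)).comap (b.repr : F →ₗ[R] (ι →₀ R)) := by
      refine Submodule.span_le.mpr fun t ht => ?_
      refine (Finsupp.mem_supported R _).mpr ?_
      exact_mod_cast Finset.coe_subset.mpr (Finset.le_sup (f := fun t => (b.repr t).support) ht)
    have := hle (hT ▸ hx)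
    exact (Finsupp.mem_supported R _).mp this
  set d := supp.card with hd
  set e2 : (↥supp → R) ≃ₗ[R] (Fin d → R) := LinearEquiv.funCongrLeft R R supp.equivFin.symm
    with he2
  set f : ↥N →ₗ[R] (Fin d → R) := e2.toLinearMap ∘ₗ c ∘ₗ N.subtype with hf
  have hfinj : Function.Injective f := by
    rw [← LinearMap.ker_eq_bot, eq_bot_iff]
    intro z hz
    have hez : e2 (c (z : F)) = 0 := hz
    have hcz : c (z : F) = 0 := by
      simpa using e2.map_eq_zero_iff.mp hez
    have hrepr : b.repr (z : F) = 0 := by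
      ext i
      by_cases hi : i ∈ supp
      · have := congrFun hcz ⟨i, hi⟩
        simpa [hc] using this
      · refine Finsupp.notMem_support_iff.mp fun hmem => hi ?_
        exact_mod_cast hsupport (z : F) z.2 hmem
    have hz0 : (z : F) = 0 := by
      simpa using b.repr.map_eq_zero_iff.mp hrepr
    simpa using Subtype.ext hz0
  have hrangefg : (LinearMap.range f).FG := by
    rw [hf, LinearMap.range_comp, LinearMap.range_comp, Submodule.range_subtype]
    exact (hN.map c).map e2.toLinearMap
  exact sfp_congr S (LinearEquiv.ofInjective f hfinj).symm
    (sfp_pi S h d (LinearMap.range f) hrangefg)
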